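/- Let G = S_n act on X = {1,...,n} naturally and on Y = S_n by left multiplication, with μ₁ and μ₂ the uniform measures on X and Y. For each G-orbit O in X × Y, the uniform measure on O (mass 1/n! at each of its n! points) has marginals μ₁ and μ₂; these n measures are exactly the extreme points of K(μ₁,μ₂), so |E(μ₁,μ₂)| = n. -/

import Mathlib

open Finset

/-- `K (μ₁, μ₂)` for the `Sₙ`-action: invariant probability weights with given marginals. -/
def Kset (n : ℕ) : Set (Fin n × Equiv.Perm (Fin n) → ℝ) :=
  {w | (∀ p, 0 ≤ w p) ∧
       (∀ (g : Equiv.Perm (Fin n)) (p : Fin n × Equiv.Perm (Fin n)), w (g • p) = w p) ∧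
       (∀ x : Fin n, ∑ y : Equiv.Perm (Fin n), w (x, y) = 1 / (n : ℝ)) ∧
       (∀ y : Equiv.Perm (Fin n), ∑ x : Fin n, w (x, y) = 1 / (n.factorial : ℝ))}

/-- The uniform measure on the orbit of `p`, with mass `1/n!` at each point. -/
noncomputable def orbUnif (n : ℕ) (p : Fin n × Equiv.Perm (Fin n)) :
    Fin n × Equiv.Perm (Fin n) → ℝ :=
  (MulAction.orbit (Equiv.Perm (Fin n)) p).indicator fun _ => 1 / (n.factorial : ℝ)

/-- orbit invariant: `q` is in the orbit of `p` iff `q.2⁻¹ q.1 = p.2⁻¹ p.1`. -/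
lemma mem_orbit_iff'' (n : ℕ) (p q : Fin n × Equiv.Perm (Fin n)) :
    q ∈ MulAction.orbit (Equiv.Perm (Fin n)) p ↔ q.2⁻¹ q.1 = p.2⁻¹ p.1 := by
  constructor
  · rintro ⟨g, rfl⟩
    simp [Prod.smul_def, Equiv.Perm.smul_def, smul_eq_mul, mul_inv_rev,
      Equiv.Perm.mul_apply]
  · intro h
    refine ⟨q.2 * p.2⁻¹, ?_⟩
    have : (q.2 * p.2⁻¹) • p = ((q.2 * p.2⁻¹) p.1, q.2 * p.2⁻¹ * p.2) := by
      simp [Prod.smul_def, Equiv.Perm.smul_def, smul_eq_mul]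
    show (q.2 * p.2⁻¹) • p = q
    rw [this]
    have h1 : (q.2 * p.2⁻¹) p.1 = q.1 := by
      have := congrArg q.2 h
      simpa [Equiv.Perm.mul_apply] using this.symm
    ext <;> simp [h1]

/-- constancy of the marginal sum -/
lemma sum_perm_const (n : ℕ) (c : Fin n → ℝ) (x x' : Fin n) :
    ∑ h : Equiv.Perm (Fin n), c (h x) = ∑ h : Equiv.Perm (Fin n), c (h x') := by
  refine Fintype.sum_equiv (Equiv.mulRight (Equiv.swap x x')) _ _ ?_
  intro h
  simp [Equiv.Perm.mul_apply]

lemma sum_perm_apply (n : ℕ) (c : Fin n → ℝ) (x : Fin n) :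
    (n : ℝ) * ∑ h : Equiv.Perm (Fin n), c (h x) = (n.factorial : ℝ) * ∑ i, c i := by
  have key : ∑ x' : Fin n, ∑ h : Equiv.Perm (Fin n), c (h x')
      = (n.factorial : ℝ) * ∑ i, c i := by
    rw [Finset.sum_comm]
    have : ∀ h : Equiv.Perm (Fin n), ∑ x' : Fin n, c (h x') = ∑ i, c i := fun h =>
      Equiv.sum_comp h c
    simp only [this, Finset.sum_const, Finset.card_univ, Fintype.card_perm,
      Fintype.card_fin, nsmul_eq_mul]
  calc (n : ℝ) * ∑ h : Equiv.Perm (Fin n), c (h x)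
      = ∑ x' : Fin n, ∑ h : Equiv.Perm (Fin n), c (h x') := by
        rw [Finset.sum_congr rfl fun x' _ => sum_perm_const n c x' x]
        simp [Finset.sum_const, mul_comm]
    _ = _ := key

/-- Membership in `Kset` for measures of the form `c ∘ (invariant)`. -/
lemma W_mem (n : ℕ) (c : Fin n → ℝ) (hc : ∀ i, 0 ≤ c i)
    (hs : ∑ i, c i = 1 / (n.factorial : ℝ)) (hn : 1 ≤ n) :
    (fun p : Fin n × Equiv.Perm (Fin n) => c (p.2⁻¹ p.1)) ∈ Kset n := by
  have hn0 : (n : ℝ) ≠ 0 := by positivity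
  have hf0 : (n.factorial : ℝ) ≠ 0 := by positivity
  refine ⟨fun p => hc _, ?_, ?_, ?_⟩
  · intro g p
    simp [Prod.smul_def, Equiv.Perm.smul_def, smul_eq_mul, mul_inv_rev,
      Equiv.Perm.mul_apply]
  · intro x
    have h1 : ∑ y : Equiv.Perm (Fin n), c (y⁻¹ x) = ∑ y : Equiv.Perm (Fin n), c (y x) := by
      refine Fintype.sum_equiv (Equiv.inv (Equiv.Perm (Fin n))) _ _ ?_
      intro h; rfl
    have h2 := sum_perm_apply n c x
    rw [hs] at h2
    have : ∑ y : Equiv.Perm (Fin n), c (y x) = 1 / (n : ℝ) := by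
      field_simp at h2 ⊢
      linarith
    show ∑ y : Equiv.Perm (Fin n), c (y⁻¹ x) = 1 / (n : ℝ)
    rw [h1]; exact this
  · intro y
    have : ∑ x : Fin n, c (y⁻¹ x) = ∑ i, c i := Equiv.sum_comp y⁻¹ c
    show ∑ x : Fin n, c (y⁻¹ x) = 1 / (n.factorial : ℝ)
    rw [this]; exact hs

/-- The scaled coordinate vector. -/
noncomputable def eVec (n : ℕ) (i : Fin n) : Fin n → ℝ :=
  fun j => if j = i then 1 / (n.factorial : ℝ) else 0

lemma eVec_nonneg (n : ℕ) (i j : Fin n) : 0 ≤ eVec n i j := by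
  unfold eVec; positivity

lemma eVec_sum (n : ℕ) (i : Fin n) : ∑ j, eVec n i j = 1 / (n.factorial : ℝ) := by
  simp [eVec]

lemma orbUnif_eq (n : ℕ) (p : Fin n × Equiv.Perm (Fin n)) :
    orbUnif n p = fun q : Fin n × Equiv.Perm (Fin n) => eVec n (p.2⁻¹ p.1) (q.2⁻¹ q.1) := by
  classical
  funext q
  rw [orbUnif, Set.indicator_apply, eVec]
  by_cases h : q ∈ MulAction.orbit (Equiv.Perm (Fin n)) p
  · rw [if_pos h, if_pos ((mem_orbit_iff'' n p q).mp h)]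
  · rw [if_neg h, if_neg (fun hh => h ((mem_orbit_iff'' n p q).mpr hh))]

/-- any `w ∈ Kset` is of the form `c ∘ invariant`. -/
lemma Kset_form (n : ℕ) (w : Fin n × Equiv.Perm (Fin n) → ℝ) (hw : w ∈ Kset n) :
    w = fun q : Fin n × Equiv.Perm (Fin n) => w (q.2⁻¹ q.1, 1) := by
  funext q
  have := hw.2.1 q.2⁻¹ q
  have h2 : q.2⁻¹ • q = (q.2⁻¹ q.1, (1 : Equiv.Perm (Fin n))) := by
    simp [Prod.smul_def, Equiv.Perm.smul_def, smul_eq_mul]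
  rw [h2] at this
  exact this.symm

theorem stmt_18 (n : ℕ) (hn : 1 ≤ n) :
    (∀ p : Fin n × Equiv.Perm (Fin n), orbUnif n p ∈ Kset n) ∧
    Set.extremePoints ℝ (Kset n) =
      {w | ∃ p : Fin n × Equiv.Perm (Fin n), w = orbUnif n p} ∧
    (Set.extremePoints ℝ (Kset n)).ncard = n := by
  have hf0 : (0 : ℝ) < (n.factorial : ℝ) := by positivity
  -- Part 1
  have part1 : ∀ p : Fin n × Equiv.Perm (Fin n), orbUnif n p ∈ Kset n := by
    intro p
    rw [orbUnif_eq]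
    exact W_mem n (eVec n (p.2⁻¹ p.1)) (eVec_nonneg n _) (eVec_sum n _) hn
  -- key facts about members of Kset
  have cprops : ∀ w ∈ Kset n, (∀ i, 0 ≤ w (i, 1)) ∧ ∑ i, w (i, 1) = 1 / (n.factorial : ℝ) :=
    fun w hw => ⟨fun i => hw.1 _, hw.2.2.2 1⟩
  -- characterization of orbUnif at base points
  have orb_base : ∀ i : Fin n, orbUnif n (i, 1) = fun q : Fin n × Equiv.Perm (Fin n) =>
      eVec n i (q.2⁻¹ q.1) := by
    intro i
    rw [orbUnif_eq]
    simp
  -- Part 2 : set equality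
  have part2 : Set.extremePoints ℝ (Kset n) =
      {w | ∃ p : Fin n × Equiv.Perm (Fin n), w = orbUnif n p} := by
    ext w
    simp only [Set.mem_setOf_eq, mem_extremePoints]
    constructor
    · rintro ⟨hw, hext⟩
      set c : Fin n → ℝ := fun i => w (i, 1) with hc
      obtain ⟨hc0, hcs⟩ := cprops w hw
      have hwform := Kset_form n w hw
      -- there is some i with c i ≠ 0
      have hex : ∃ i, c i ≠ 0 := by
        by_contra h
        push_neg at h
        rw [Finset.sum_eq_zero (fun i _ => h i)] at hcs
        exact absurd hcs.symm (by positivity)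
      obtain ⟨i, hi⟩ := hex
      have hipos : 0 < c i := lt_of_le_of_ne (hc0 i) (Ne.symm hi)
      by_cases hall : ∀ j, j ≠ i → c j = 0
      · -- w = orbUnif (i, 1)
        refine ⟨(i, 1), ?_⟩
        have hci : c i = 1 / (n.factorial : ℝ) := by
          rw [← hcs, Finset.sum_eq_single i (fun j _ hj => hall j hj) (by simp)]
        rw [orb_base i, hwform]
        funext q
        simp only [eVec]
        by_cases hq : q.2⁻¹ q.1 = i
        · rw [if_pos hq, hq]; exact hci
        · rw [if_neg hq]; exact hall _ hq
      · push_neg at hall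
        obtain ⟨j, hji, hj⟩ := hall
        have hjpos : 0 < c j := lt_of_le_of_ne (hc0 j) (Ne.symm hj)
        exfalso
        set ε : ℝ := min (c i) (c j) with hε
        have hεpos : 0 < ε := lt_min hipos hjpos
        set c₁ : Fin n → ℝ := fun k => c k + (if k = i then ε else 0) - (if k = j then ε else 0) with hc₁
        set c₂ : Fin n → ℝ := fun k => c k - (if k = i then ε else 0) + (if k = j then ε else 0) with hc₂
        have hc₁0 : ∀ k, 0 ≤ c₁ k := by
          intro k
          have h1 := hc0 k
          have h2 : ε ≤ c j := min_le_right _ _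
          have h3 : ε ≤ c i := min_le_left _ _
          simp only [hc₁]
          split_ifs with hki hkj hkj
          · linarith
          · linarith
          · rw [hkj]; simp only [hc]; linarith [hc0 j]
          · linarith
        have hc₂0 : ∀ k, 0 ≤ c₂ k := by
          intro k
          have h1 := hc0 k
          have h2 : ε ≤ c j := min_le_right _ _
          have h3 : ε ≤ c i := min_le_left _ _
          simp only [hc₂]
          split_ifs with hki hkj hkj
          · linarith
          · rw [hki]; simp only [hc]; linarith [hc0 i]
          · linarith
          · linarith
        have hsum1 : ∑ k, c₁ k = 1 / (n.factorial : ℝ) := by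
          simp only [hc₁, Finset.sum_sub_distrib, Finset.sum_add_distrib]
          rw [Finset.sum_ite_eq' Finset.univ i fun _ => ε,
            Finset.sum_ite_eq' Finset.univ j fun _ => ε]
          simpa using hcs
        have hsum2 : ∑ k, c₂ k = 1 / (n.factorial : ℝ) := by
          simp only [hc₂, Finset.sum_sub_distrib, Finset.sum_add_distrib]
          rw [Finset.sum_ite_eq' Finset.univ i fun _ => ε,
            Finset.sum_ite_eq' Finset.univ j fun _ => ε]
          simpa using hcs
        set w₁ : Fin n × Equiv.Perm (Fin n) → ℝ := fun q => c₁ (q.2⁻¹ q.1) with hw₁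
        set w₂ : Fin n × Equiv.Perm (Fin n) → ℝ := fun q => c₂ (q.2⁻¹ q.1) with hw₂
        have hw₁K : w₁ ∈ Kset n := W_mem n c₁ hc₁0 hsum1 hn
        have hw₂K : w₂ ∈ Kset n := W_mem n c₂ hc₂0 hsum2 hn
        have hseg : w ∈ openSegment ℝ w₁ w₂ := by
          refine ⟨1/2, 1/2, by norm_num, by norm_num, by norm_num, ?_⟩
          funext q
          simp only [Pi.add_apply, Pi.smul_apply, smul_eq_mul, hw₁, hw₂, hc₁, hc₂]
          rw [hwform]
          ring
        have hkey := (hext w₁ hw₁K w₂ hw₂K hseg).1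
        have heval := congrFun hkey (i, (1 : Equiv.Perm (Fin n)))
        have hval1 : w₁ (i, (1 : Equiv.Perm (Fin n))) = c i + ε := by
          show c₁ ((1 : Equiv.Perm (Fin n))⁻¹ i) = c i + ε
          simp only [inv_one, Equiv.Perm.one_apply, hc₁]
          rw [if_true, if_neg (Ne.symm hji)]
          ring
        rw [hval1] at heval
        have hval2 : w (i, (1 : Equiv.Perm (Fin n))) = c i := rfl
        rw [hval2] at heval
        linarith
    · rintro ⟨p, rfl⟩
      refine ⟨part1 p, ?_⟩
      intro w₁ hw₁ w₂ hw₂ hseg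
      obtain ⟨a, b, ha, hb, hab, habw⟩ := hseg
      set i₀ : Fin n := p.2⁻¹ p.1 with hi₀
      obtain ⟨hc10, hc1s⟩ := cprops w₁ hw₁
      obtain ⟨hc20, hc2s⟩ := cprops w₂ hw₂
      have hw1form := Kset_form n w₁ hw₁
      have hw2form := Kset_form n w₂ hw₂
      -- at (j,1) with j ≠ i₀, the combination vanishes so each term vanishes
      have hzero : ∀ j : Fin n, j ≠ i₀ → w₁ (j, 1) = 0 ∧ w₂ (j, 1) = 0 := by
        intro j hj
        have heval := congrFun habw (j, (1 : Equiv.Perm (Fin n)))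
        rw [orbUnif_eq] at heval
        simp only [Pi.add_apply, Pi.smul_apply, smul_eq_mul, eVec, inv_one,
          Equiv.Perm.one_apply] at heval
        rw [if_neg hj] at heval
        constructor
        · by_contra h
          have h1 : 0 < w₁ (j, 1) := lt_of_le_of_ne (hc10 j) (Ne.symm h)
          nlinarith [hc20 j]
        · by_contra h
          have h1 : 0 < w₂ (j, 1) := lt_of_le_of_ne (hc20 j) (Ne.symm h)
          nlinarith [hc10 j]
      have hval : ∀ w' : Fin n × Equiv.Perm (Fin n) → ℝ, w' ∈ Kset n →
          (∀ j : Fin n, j ≠ i₀ → w' (j, 1) = 0) → w' = orbUnif n p := by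
        intro w' hw' hz
        have hcs' := (cprops w' hw').2
        have hci : w' (i₀, 1) = 1 / (n.factorial : ℝ) := by
          rw [← hcs', Finset.sum_eq_single i₀ (fun j _ hj => hz j hj) (by simp)]
        rw [orbUnif_eq, Kset_form n w' hw']
        funext q
        simp only [eVec, ← hi₀]
        by_cases hq : q.2⁻¹ q.1 = i₀
        · rw [if_pos hq, hq]; exact hci
        · rw [if_neg hq]; exact hz _ hq
      exact ⟨hval w₁ hw₁ (fun j hj => (hzero j hj).1),
        hval w₂ hw₂ (fun j hj => (hzero j hj).2)⟩
  -- Part 3 : cardinality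
  have part3 : (Set.extremePoints ℝ (Kset n)).ncard = n := by
    rw [part2]
    have hrange : {w | ∃ p : Fin n × Equiv.Perm (Fin n), w = orbUnif n p} =
        Set.range (fun i : Fin n => orbUnif n (i, 1)) := by
      ext w
      simp only [Set.mem_setOf_eq, Set.mem_range]
      constructor
      · rintro ⟨p, rfl⟩
        refine ⟨p.2⁻¹ p.1, ?_⟩
        rw [orb_base, orbUnif_eq]
      · rintro ⟨i, rfl⟩
        exact ⟨(i, 1), rfl⟩
    rw [hrange]
    have hinj : Function.Injective (fun i : Fin n => orbUnif n (i, 1)) := by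
      intro i j hij
      have h1 : orbUnif n (i, 1) = orbUnif n (j, 1) := hij
      have h2 := congrFun h1 (i, (1 : Equiv.Perm (Fin n)))
      rw [orb_base i, orb_base j] at h2
      simp only [eVec, inv_one, Equiv.Perm.one_apply] at h2
      by_contra hne
      rw [if_true, if_neg (fun h => hne h)] at h2
      have hne0 : (1 / (n.factorial : ℝ)) ≠ 0 := by positivity
      exact hne0 h2
    rw [← Set.image_univ, Set.ncard_image_of_injective _ hinj, Set.ncard_univ,
      Nat.card_eq_fintype_card, Fintype.card_fin]
  exact ⟨part1, part2, part3⟩
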